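/- In the reduced FA instance with m > 1, every optimal partition π* consists of exactly m coalitions, and for each coalition C ∈ π*: (a) there exists exactly one k ∈ [m] with K^k_X ⊆ C, and (b) for every h ∈ [3m], either K^h ⊆ C or K^h ∩ C = ∅. -/

import Mathlib

open Finset

/-- FA utility of agent `i` with friend set `t` for a coalition `C` containing her:
`u_i(C) = |C ∩ F_i| − |C ∩ E_i| / n`, where `E_i = N \ (F_i ∪ {i})`. -/
def faUtil (n : ℕ) (t : Finset (Fin n)) (i : Fin n) (C : Finset (Fin n)) : ℚ :=
  ((C ∩ t).card : ℚ) - ((C \ (t ∪ {i})).card : ℚ) / (n : ℚ)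

/-- Social welfare of a partition of the agents (`SW(π) = Σ_i u_i(π(i))`). -/
def faSW (n : ℕ) (F : Fin n → Finset (Fin n))
    (π : Finpartition (univ : Finset (Fin n))) : ℚ :=
  ∑ C ∈ π.parts, ∑ i ∈ C, faUtil n (F i) i C

/-- The reduced FA instance built from a `3`-Partition instance `x : Fin (3m) → ℕ`:
the `n` agents are the disjoint union of element-cliques `elemClique h` of size `x h`
and set-cliques `setClique k` of size `X = 4m²T`; each clique is bidirectional, and
between each element-clique and each set-clique there is a perfect matching of the
element-clique into the set-clique; no other friendship relations exist. -/
structure ReducedFA (m T n : ℕ) (x : Fin (3 * m) → ℕ) where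
  F : Fin n → Finset (Fin n)
  elemClique : Fin (3 * m) → Finset (Fin n)
  setClique : Fin m → Finset (Fin n)
  irrefl : ∀ a, a ∉ F a
  symm : ∀ a b, a ∈ F b → b ∈ F a
  elem_card : ∀ h, (elemClique h).card = x h
  set_card : ∀ k, (setClique k).card = 4 * m ^ 2 * T
  elem_disj : ∀ h h', h ≠ h' → Disjoint (elemClique h) (elemClique h')
  set_disj : ∀ k k', k ≠ k' → Disjoint (setClique k) (setClique k')
  elem_set_disj : ∀ h k, Disjoint (elemClique h) (setClique k)
  cover : (Finset.univ.biUnion elemClique) ∪ (Finset.univ.biUnion setClique)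
    = (Finset.univ : Finset (Fin n))
  elem_clique : ∀ h, ∀ a ∈ elemClique h, ∀ b ∈ elemClique h, a ≠ b → b ∈ F a
  set_clique : ∀ k, ∀ a ∈ setClique k, ∀ b ∈ setClique k, a ≠ b → b ∈ F a
  matching : ∀ (h : Fin (3 * m)) (k : Fin m), ∀ a ∈ elemClique h,
    (setClique k ∩ F a).card = 1
  matching_inj : ∀ (h : Fin (3 * m)) (k : Fin m), ∀ b ∈ setClique k,
    (elemClique h ∩ F b).card ≤ 1
  elem_elem : ∀ h h', h ≠ h' → ∀ a ∈ elemClique h, ∀ b ∈ elemClique h', b ∉ F a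
  set_set : ∀ k k', k ≠ k' → ∀ a ∈ setClique k, ∀ b ∈ setClique k', b ∉ F a
namespace Stmt11Aux
open Finset

variable {m T n : ℕ} {x : Fin (3*m) → ℕ} (R : ReducedFA m T n x)

/-- Union of all element cliques. -/
def Ue : Finset (Fin n) := Finset.univ.biUnion R.elemClique
/-- Union of all set cliques. -/
def Us : Finset (Fin n) := Finset.univ.biUnion R.setClique
/-- Total friendship count inside a coalition. -/
def dC (C : Finset (Fin n)) : ℕ := ∑ i ∈ C, (C ∩ R.F i).card

lemma pairsym (A B : Finset (Fin n)) :
    ∑ b ∈ B, (A ∩ R.F b).card = ∑ a ∈ A, (B ∩ R.F a).card := by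
  have h1 : ∀ (s t : Finset (Fin n)) (b : Fin n), (s ∩ R.F b).card
      = ∑ a ∈ s, if a ∈ R.F b then 1 else 0 := by
    intro s t b
    rw [← Finset.filter_mem_eq_inter, Finset.card_filter]
  simp only [h1 A B, h1 B A]
  rw [Finset.sum_comm]
  refine Finset.sum_congr rfl fun a _ => Finset.sum_congr rfl fun b _ => ?_
  congr 1
  simp only [eq_iff_iff]
  exact ⟨fun h => R.symm a b h, fun h => R.symm b a h⟩

lemma Ue_union_Us : Ue R ∪ Us R = Finset.univ := R.cover

lemma disj_Ue_Us : Disjoint (Ue R) (Us R) := by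
  rw [Ue, Us, Finset.disjoint_biUnion_left]
  intro h _
  rw [Finset.disjoint_biUnion_right]
  intro k _
  exact R.elem_set_disj h k

lemma mem_Ue {a : Fin n} : a ∈ Ue R ↔ ∃ h, a ∈ R.elemClique h := by
  simp [Ue]

lemma mem_Us {a : Fin n} : a ∈ Us R ↔ ∃ k, a ∈ R.setClique k := by
  simp [Us]

lemma C_split (C : Finset (Fin n)) :
    C = (C ∩ Ue R) ∪ (C ∩ Us R) := by
  rw [← Finset.inter_union_distrib_left, Ue_union_Us, Finset.inter_univ]

lemma sum_C_split {M : Type*} [AddCommMonoid M] (C : Finset (Fin n)) (f : Fin n → M) :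
    ∑ i ∈ C, f i = ∑ i ∈ C ∩ Ue R, f i + ∑ i ∈ C ∩ Us R, f i := by
  rw [← Finset.sum_union (Finset.disjoint_of_subset_left Finset.inter_subset_right
    (Finset.disjoint_of_subset_right Finset.inter_subset_right (disj_Ue_Us R)))]
  exact Finset.sum_congr (C_split R C) fun _ _ => rfl

lemma sum_Us_split {M : Type*} [AddCommMonoid M] (C : Finset (Fin n)) (f : Fin n → M) :
    ∑ i ∈ C ∩ Us R, f i = ∑ k, ∑ i ∈ C ∩ R.setClique k, f i := by
  have : C ∩ Us R = Finset.univ.biUnion (fun k => C ∩ R.setClique k) := by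
    rw [Us, Finset.inter_biUnion]
  rw [this, Finset.sum_biUnion]
  intro k _ k' _ hkk'
  exact Finset.disjoint_of_subset_left Finset.inter_subset_right
    (Finset.disjoint_of_subset_right Finset.inter_subset_right (R.set_disj k k' hkk'))

lemma sum_Ue_split {M : Type*} [AddCommMonoid M] (C : Finset (Fin n)) (f : Fin n → M) :
    ∑ i ∈ C ∩ Ue R, f i = ∑ h, ∑ i ∈ C ∩ R.elemClique h, f i := by
  have : C ∩ Ue R = Finset.univ.biUnion (fun h => C ∩ R.elemClique h) := by
    rw [Ue, Finset.inter_biUnion]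
  rw [this, Finset.sum_biUnion]
  intro k _ k' _ hkk'
  exact Finset.disjoint_of_subset_left Finset.inter_subset_right
    (Finset.disjoint_of_subset_right Finset.inter_subset_right (R.elem_disj k k' hkk'))

lemma card_Us_split (C : Finset (Fin n)) :
    (C ∩ Us R).card = ∑ k, (C ∩ R.setClique k).card := by
  rw [Finset.card_eq_sum_ones, sum_Us_split]
  exact Finset.sum_congr rfl fun k _ => (Finset.card_eq_sum_ones _).symm

lemma card_Ue_split (C : Finset (Fin n)) :
    (C ∩ Ue R).card = ∑ h, (C ∩ R.elemClique h).card := by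
  rw [Finset.card_eq_sum_ones, sum_Ue_split]
  exact Finset.sum_congr rfl fun k _ => (Finset.card_eq_sum_ones _).symm

lemma card_C_split (C : Finset (Fin n)) :
    C.card = (C ∩ Ue R).card + (C ∩ Us R).card := by
  rw [Finset.card_eq_sum_ones, sum_C_split, ← Finset.card_eq_sum_ones, ← Finset.card_eq_sum_ones]

end Stmt11Aux
namespace Stmt11Aux
open Finset

variable {m T n : ℕ} {x : Fin (3*m) → ℕ} (R : ReducedFA m T n x)

lemma util_eq (hn : 0 < n) {C : Finset (Fin n)} {i : Fin n} (hi : i ∈ C) :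
    faUtil n (R.F i) i C
      = ((n+1 : ℚ) * ((C ∩ R.F i).card) - (C.card : ℚ) + 1) / n := by
  have hnotm : i ∉ R.F i := R.irrefl i
  have key : (C \ (R.F i ∪ {i})).card + ((C ∩ R.F i).card + 1) = C.card := by
    have h1 : (C ∩ (R.F i ∪ {i})).card = (C ∩ R.F i).card + 1 := by
      rw [Finset.inter_union_distrib_left, Finset.inter_singleton_of_mem hi,
        Finset.card_union_of_disjoint (by simp [hnotm]), Finset.card_singleton]
    have h2 := Finset.card_inter_add_card_sdiff C (R.F i ∪ {i})
    omega
  have hn' : (0:ℚ) < n := by exact_mod_cast hn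
  have hcast : ((C \ (R.F i ∪ {i})).card : ℚ)
      = (C.card : ℚ) - (C ∩ R.F i).card - 1 := by
    have := congrArg (fun z : ℕ => (z : ℚ)) key
    push_cast at this
    linarith
  rw [faUtil, hcast]
  field_simp
  ring

lemma sum_util (hn : 0 < n) (C : Finset (Fin n)) :
    ∑ i ∈ C, faUtil n (R.F i) i C =
      ((n+1 : ℚ) * (dC R C) - (C.card : ℚ)^2 + C.card) / n := by
  rw [Finset.sum_congr rfl (fun i hi => util_eq R hn hi), ← Finset.sum_div]
  congr 1
  rw [Finset.sum_add_distrib, Finset.sum_sub_distrib,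
    ← Finset.mul_sum, Finset.sum_const, Finset.sum_const]
  have hd : ∑ i ∈ C, ((C ∩ R.F i).card : ℚ) = (dC R C : ℚ) := by
    rw [dC]; push_cast; rfl
  rw [hd]
  simp only [nsmul_eq_mul, mul_one]
  ring

lemma faSW_eq (hn : 0 < n) (π : Finpartition (univ : Finset (Fin n))) :
    faSW n R.F π = ((n+1:ℚ) * (∑ C ∈ π.parts, (dC R C : ℚ))
      - (∑ C ∈ π.parts, (C.card:ℚ)^2) + n) / n := by
  rw [faSW, Finset.sum_congr rfl (fun C _ => sum_util R hn C), ← Finset.sum_div]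
  congr 1
  rw [Finset.sum_add_distrib, Finset.sum_sub_distrib, ← Finset.mul_sum]
  have : ∑ C ∈ π.parts, (C.card : ℚ) = (n : ℚ) := by
    have := π.sum_card_parts
    rw [Finset.card_univ, Fintype.card_fin] at this
    exact_mod_cast congrArg (fun z : ℕ => (z:ℚ)) this
  rw [this]

/-- each agent lies in exactly one part -/
lemma filter_parts_eq (π : Finpartition (univ : Finset (Fin n))) (i : Fin n) :
    ∃ P ∈ π.parts, π.parts.filter (fun C => i ∈ C) = {P} := by
  obtain ⟨P, ⟨hP, hiP⟩, huniq⟩ := π.existsUnique_mem (Finset.mem_univ i)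
  refine ⟨P, hP, ?_⟩
  ext D
  simp only [Finset.mem_filter, Finset.mem_singleton]
  constructor
  · rintro ⟨hD, hiD⟩; exact huniq D ⟨hD, hiD⟩
  · rintro rfl; exact ⟨hP, hiP⟩

lemma sum_ite_parts (π : Finpartition (univ : Finset (Fin n))) (i : Fin n) :
    ∑ C ∈ π.parts, (if i ∈ C then 1 else 0) = 1 := by
  obtain ⟨P, hP, hfil⟩ := filter_parts_eq π i
  rw [← Finset.sum_filter, hfil]
  simp

lemma sum_part_inter (π : Finpartition (univ : Finset (Fin n))) (t : Finset (Fin n)) :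
    ∑ C ∈ π.parts, (C ∩ t).card = t.card := by
  have h1 : ∀ C : Finset (Fin n), (C ∩ t).card = ∑ i ∈ t, if i ∈ C then 1 else 0 := by
    intro C
    rw [Finset.inter_comm, ← Finset.filter_mem_eq_inter, Finset.card_filter]
  simp only [h1]
  rw [Finset.sum_comm]
  rw [Finset.sum_congr rfl (fun i _ => sum_ite_parts π i), Finset.sum_const, smul_eq_mul, mul_one]

lemma sq_sum_le {α : Type*} (s : Finset α) (f : α → ℕ) :
    ∑ i ∈ s, f i ^ 2 ≤ (∑ i ∈ s, f i)^2 := by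
  calc ∑ i ∈ s, f i ^ 2 ≤ ∑ i ∈ s, f i * (∑ j ∈ s, f j) := by
        refine Finset.sum_le_sum fun i hi => ?_
        rw [pow_two]
        exact Nat.mul_le_mul_left _ (Finset.single_le_sum (fun j _ => Nat.zero_le _) hi)
    _ = (∑ i ∈ s, f i)^2 := by rw [← Finset.sum_mul, pow_two]

end Stmt11Aux
namespace Stmt11Aux
open Finset

variable {m T n : ℕ} {x : Fin (3*m) → ℕ} (R : ReducedFA m T n x)

lemma friends_set_sub {k : Fin m} {b : Fin n} (hb : b ∈ R.setClique k) :
    R.F b ∩ Us R ⊆ (R.setClique k).erase b := by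
  intro t ht
  rw [Finset.mem_inter, mem_Us] at ht
  obtain ⟨htF, k', htk'⟩ := ht
  have hkk : k' = k := by
    by_contra hne
    exact R.set_set k k' (Ne.symm hne) b hb t htk' htF
  subst hkk
  rw [Finset.mem_erase]
  refine ⟨?_, htk'⟩
  rintro rfl
  exact R.irrefl t htF

lemma friends_elem_sub {h : Fin (3*m)} {a : Fin n} (ha : a ∈ R.elemClique h) :
    R.F a ∩ Ue R ⊆ (R.elemClique h).erase a := by
  intro t ht
  rw [Finset.mem_inter, mem_Ue] at ht
  obtain ⟨htF, h', hth'⟩ := ht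
  have hkk : h' = h := by
    by_contra hne
    exact R.elem_elem h h' (Ne.symm hne) a ha t hth' htF
  subst hkk
  rw [Finset.mem_erase]
  refine ⟨?_, hth'⟩
  rintro rfl
  exact R.irrefl t htF

lemma erase_sub_friends_set {k : Fin m} {b : Fin n} (hb : b ∈ R.setClique k) :
    (R.setClique k).erase b ⊆ R.F b := by
  intro t ht
  rw [Finset.mem_erase] at ht
  exact R.set_clique k b hb t ht.2 (Ne.symm ht.1)

lemma erase_sub_friends_elem {h : Fin (3*m)} {a : Fin n} (ha : a ∈ R.elemClique h) :
    (R.elemClique h).erase a ⊆ R.F a := by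
  intro t ht
  rw [Finset.mem_erase] at ht
  exact R.elem_clique h a ha t ht.2 (Ne.symm ht.1)

/-- number of set-friends of an element agent inside part of `Us` -/
lemma elem_us_friends {a : Fin n} (ha : a ∈ Ue R) :
    (Us R ∩ R.F a).card = m := by
  rw [Finset.inter_comm, card_Us_split]
  obtain ⟨h, hah⟩ := (mem_Ue R).1 ha
  have : ∀ k : Fin m, (R.F a ∩ R.setClique k).card = 1 := by
    intro k
    rw [Finset.inter_comm]
    exact R.matching h k a hah
  rw [Finset.sum_congr rfl (fun k _ => this k), Finset.sum_const,
    Finset.card_univ, Fintype.card_fin, smul_eq_mul, mul_one]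

/-- the general per-coalition upper bound on friendships. -/
lemma dC_upper (C : Finset (Fin n)) :
    dC R C + C.card ≤ (∑ k, (C ∩ R.setClique k).card ^ 2)
      + (∑ h, (C ∩ R.elemClique h).card ^ 2)
      + 2 * ∑ a ∈ C ∩ Ue R, ((C ∩ Us R) ∩ R.F a).card := by
  have hsplit : ∀ i : Fin n, (C ∩ R.F i).card
      = ((C ∩ Ue R) ∩ R.F i).card + ((C ∩ Us R) ∩ R.F i).card := by
    intro i
    rw [Finset.inter_right_comm C (Ue R) (R.F i), Finset.inter_right_comm C (Us R) (R.F i)]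
    exact card_C_split R (C ∩ R.F i)
  have hcross : ∑ b ∈ C ∩ Us R, ((C ∩ Ue R) ∩ R.F b).card
      = ∑ a ∈ C ∩ Ue R, ((C ∩ Us R) ∩ R.F a).card := pairsym R _ _
  -- set side bound
  have hset : ∑ b ∈ C ∩ Us R, (((C ∩ Us R) ∩ R.F b).card + 1)
      ≤ ∑ k, (C ∩ R.setClique k).card ^ 2 := by
    rw [sum_Us_split]
    refine Finset.sum_le_sum fun k _ => ?_
    have hb : ∀ b ∈ C ∩ R.setClique k,
        ((C ∩ Us R) ∩ R.F b).card + 1 ≤ (C ∩ R.setClique k).card := by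
      intro b hbmem
      rw [Finset.mem_inter] at hbmem
      have hsub : (C ∩ Us R) ∩ R.F b ⊆ (C ∩ R.setClique k).erase b := by
        intro t ht
        simp only [Finset.mem_inter] at ht
        have := friends_set_sub R hbmem.2 (Finset.mem_inter.2 ⟨ht.2, ht.1.2⟩)
        rw [Finset.mem_erase] at this ⊢
        exact ⟨this.1, Finset.mem_inter.2 ⟨ht.1.1, this.2⟩⟩
      have h1 := Finset.card_le_card hsub
      have h2 : ((C ∩ R.setClique k).erase b).card + 1 = (C ∩ R.setClique k).card :=
        Finset.card_erase_add_one (Finset.mem_inter.2 hbmem)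
      omega
    calc ∑ b ∈ C ∩ R.setClique k, (((C ∩ Us R) ∩ R.F b).card + 1)
        ≤ ∑ _b ∈ C ∩ R.setClique k, (C ∩ R.setClique k).card := Finset.sum_le_sum hb
      _ = (C ∩ R.setClique k).card ^ 2 := by
          rw [Finset.sum_const, smul_eq_mul, pow_two]
  -- element side bound
  have helem : ∑ a ∈ C ∩ Ue R, (((C ∩ Ue R) ∩ R.F a).card + 1)
      ≤ ∑ h, (C ∩ R.elemClique h).card ^ 2 := by
    rw [sum_Ue_split]
    refine Finset.sum_le_sum fun h _ => ?_
    have hb : ∀ a ∈ C ∩ R.elemClique h,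
        ((C ∩ Ue R) ∩ R.F a).card + 1 ≤ (C ∩ R.elemClique h).card := by
      intro a hamem
      rw [Finset.mem_inter] at hamem
      have hsub : (C ∩ Ue R) ∩ R.F a ⊆ (C ∩ R.elemClique h).erase a := by
        intro t ht
        simp only [Finset.mem_inter] at ht
        have := friends_elem_sub R hamem.2 (Finset.mem_inter.2 ⟨ht.2, ht.1.2⟩)
        rw [Finset.mem_erase] at this ⊢
        exact ⟨this.1, Finset.mem_inter.2 ⟨ht.1.1, this.2⟩⟩
      have h1 := Finset.card_le_card hsub
      have h2 : ((C ∩ R.elemClique h).erase a).card + 1 = (C ∩ R.elemClique h).card :=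
        Finset.card_erase_add_one (Finset.mem_inter.2 hamem)
      omega
    calc ∑ a ∈ C ∩ R.elemClique h, (((C ∩ Ue R) ∩ R.F a).card + 1)
        ≤ ∑ _a ∈ C ∩ R.elemClique h, (C ∩ R.elemClique h).card := Finset.sum_le_sum hb
      _ = (C ∩ R.elemClique h).card ^ 2 := by
          rw [Finset.sum_const, smul_eq_mul, pow_two]
  have hD : dC R C + C.card
      = (∑ a ∈ C ∩ Ue R, (((C ∩ Ue R) ∩ R.F a).card + 1))
        + (∑ b ∈ C ∩ Us R, (((C ∩ Us R) ∩ R.F b).card + 1))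
        + (∑ a ∈ C ∩ Ue R, ((C ∩ Us R) ∩ R.F a).card)
        + (∑ b ∈ C ∩ Us R, ((C ∩ Ue R) ∩ R.F b).card) := by
    rw [dC, sum_C_split R C (fun i => (C ∩ R.F i).card), card_C_split R C]
    simp only [hsplit, Finset.sum_add_distrib]
    simp only [Finset.sum_const, smul_eq_mul, mul_one]
    ring
  rw [hD, hcross]
  omega

end Stmt11Aux
namespace Stmt11Aux
open Finset

variable {m T n : ℕ} {x : Fin (3*m) → ℕ} (R : ReducedFA m T n x)

lemma card_Ue : (Ue R).card = ∑ h, x h := by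
  rw [Ue, Finset.card_biUnion]
  · exact Finset.sum_congr rfl fun h _ => R.elem_card h
  · intro h _ h' _ hne
    exact R.elem_disj h h' hne

lemma setClique_sub_Us (k : Fin m) : R.setClique k ⊆ Us R :=
  Finset.subset_biUnion_of_mem R.setClique (Finset.mem_univ k)

lemma elemClique_sub_Ue (h : Fin (3*m)) : R.elemClique h ⊆ Ue R :=
  Finset.subset_biUnion_of_mem R.elemClique (Finset.mem_univ h)

lemma dC_set_lower (k : Fin m) :
    (R.setClique k).card ^ 2 ≤ dC R (R.setClique k) + (R.setClique k).card := by
  rw [dC, pow_two]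
  have : ∀ b ∈ R.setClique k,
      (R.setClique k).card ≤ (R.setClique k ∩ R.F b).card + 1 := by
    intro b hb
    have hsub : (R.setClique k).erase b ⊆ R.setClique k ∩ R.F b := by
      intro t ht
      exact Finset.mem_inter.2 ⟨Finset.mem_of_mem_erase ht, erase_sub_friends_set R hb ht⟩
    have h1 := Finset.card_le_card hsub
    have h2 := Finset.card_erase_add_one hb
    omega
  calc (R.setClique k).card * (R.setClique k).card
      = ∑ _b ∈ R.setClique k, (R.setClique k).card := by
        rw [Finset.sum_const, smul_eq_mul]
    _ ≤ ∑ b ∈ R.setClique k, ((R.setClique k ∩ R.F b).card + 1) :=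
        Finset.sum_le_sum this
    _ = (∑ b ∈ R.setClique k, (R.setClique k ∩ R.F b).card) + (R.setClique k).card := by
        rw [Finset.sum_add_distrib, Finset.sum_const, smul_eq_mul, mul_one]

lemma disj_Ue_set (k : Fin m) : Disjoint (Ue R) (R.setClique k) :=
  Finset.disjoint_of_subset_right (setClique_sub_Us R k) (disj_Ue_Us R)

lemma dC_big_lower (k0 : Fin m) :
    (R.setClique k0).card ^ 2 + 2 * (Ue R).card + (∑ h, (x h)^2)
      ≤ dC R (Ue R ∪ R.setClique k0) + (Ue R ∪ R.setClique k0).card := by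
  set G := Ue R ∪ R.setClique k0 with hG
  have hcard : G.card = (Ue R).card + (R.setClique k0).card :=
    Finset.card_union_of_disjoint (disj_Ue_set R k0)
  have hdsum : dC R G = (∑ a ∈ Ue R, (G ∩ R.F a).card)
      + (∑ b ∈ R.setClique k0, (G ∩ R.F b).card) := by
    rw [dC, hG, Finset.sum_union (disj_Ue_set R k0)]
  -- set agents
  have hsetside : ∀ b ∈ R.setClique k0,
      (R.setClique k0).card + (Ue R ∩ R.F b).card ≤ (G ∩ R.F b).card + 1 := by
    intro b hb
    have hsub : ((R.setClique k0).erase b) ∪ (Ue R ∩ R.F b) ⊆ G ∩ R.F b := by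
      intro t ht
      rcases Finset.mem_union.1 ht with ht | ht
      · exact Finset.mem_inter.2 ⟨Finset.mem_union.2 (Or.inr (Finset.mem_of_mem_erase ht)),
          erase_sub_friends_set R hb ht⟩
      · rcases Finset.mem_inter.1 ht with ⟨h1, h2⟩
        exact Finset.mem_inter.2 ⟨Finset.mem_union.2 (Or.inl h1), h2⟩
    have hdisj : Disjoint ((R.setClique k0).erase b) (Ue R ∩ R.F b) :=
      Finset.disjoint_of_subset_left (Finset.erase_subset _ _)
        (Finset.disjoint_of_subset_right Finset.inter_subset_left (disj_Ue_set R k0).symm)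
    have h1 := Finset.card_le_card hsub
    rw [Finset.card_union_of_disjoint hdisj] at h1
    have h2 := Finset.card_erase_add_one hb
    omega
  have hset2 : (R.setClique k0).card * (R.setClique k0).card
        + ∑ b ∈ R.setClique k0, (Ue R ∩ R.F b).card
      ≤ (∑ b ∈ R.setClique k0, (G ∩ R.F b).card) + (R.setClique k0).card := by
    have := Finset.sum_le_sum hsetside
    rw [Finset.sum_add_distrib, Finset.sum_add_distrib, Finset.sum_const, smul_eq_mul,
      Finset.sum_const, smul_eq_mul, mul_one] at this
    omega
  have hmatchcount : ∑ b ∈ R.setClique k0, (Ue R ∩ R.F b).card = (Ue R).card := by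
    rw [pairsym R (Ue R) (R.setClique k0), card_Ue]
    have : Ue R = Finset.univ.biUnion (fun h => R.elemClique h) := rfl
    rw [this, Finset.sum_biUnion (fun h _ h' _ hne => R.elem_disj h h' hne)]
    refine Finset.sum_congr rfl fun h _ => ?_
    rw [Finset.sum_congr rfl (fun a ha => R.matching h k0 a ha), Finset.sum_const,
      smul_eq_mul, mul_one, R.elem_card h]
  -- element agents
  have helemside : ∀ h : Fin (3*m), ∀ a ∈ R.elemClique h,
      x h ≤ (G ∩ R.F a).card := by
    intro h a ha
    have hsub : ((R.elemClique h).erase a) ∪ (R.setClique k0 ∩ R.F a) ⊆ G ∩ R.F a := by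
      intro t ht
      rcases Finset.mem_union.1 ht with ht | ht
      · exact Finset.mem_inter.2 ⟨Finset.mem_union.2 (Or.inl
          (elemClique_sub_Ue R h (Finset.mem_of_mem_erase ht))),
          erase_sub_friends_elem R ha ht⟩
      · rcases Finset.mem_inter.1 ht with ⟨h1, h2⟩
        exact Finset.mem_inter.2 ⟨Finset.mem_union.2 (Or.inr h1), h2⟩
    have hdisj : Disjoint ((R.elemClique h).erase a) (R.setClique k0 ∩ R.F a) :=
      Finset.disjoint_of_subset_left (Finset.erase_subset _ _)
        (Finset.disjoint_of_subset_right Finset.inter_subset_left (R.elem_set_disj h k0))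
    have h1 := Finset.card_le_card hsub
    rw [Finset.card_union_of_disjoint hdisj, R.matching h k0 a ha] at h1
    have h2 := Finset.card_erase_add_one ha
    rw [R.elem_card h] at h2
    omega
  have helem2 : (∑ h, (x h)^2) ≤ ∑ a ∈ Ue R, (G ∩ R.F a).card := by
    have : Ue R = Finset.univ.biUnion (fun h => R.elemClique h) := rfl
    rw [this, Finset.sum_biUnion (fun h _ h' _ hne => R.elem_disj h h' hne)]
    refine Finset.sum_le_sum fun h _ => ?_
    calc (x h)^2 = ∑ _a ∈ R.elemClique h, x h := by
          rw [Finset.sum_const, R.elem_card h, smul_eq_mul, pow_two]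
      _ ≤ _ := Finset.sum_le_sum (helemside h)
  rw [hdsum, hcard, pow_two]
  omega

end Stmt11Aux
namespace Stmt11Aux
open Finset

variable {m T n : ℕ} {x : Fin (3*m) → ℕ}

lemma setClique_nonempty (R : ReducedFA m T n x) (hm : 0 < m) (hT : 0 < T) (k : Fin m) :
    (R.setClique k).Nonempty := by
  rw [← Finset.card_pos, R.set_card]
  positivity

lemma Ue_nonempty (R : ReducedFA m T n x) (hm : 0 < m) (hx : ∀ h, 0 < x h) :
    (Ue R).Nonempty := by
  rw [← Finset.card_pos, card_Ue]
  calc 0 < x ⟨0, by positivity⟩ := hx _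
    _ ≤ ∑ h, x h := Finset.single_le_sum (fun h _ => Nat.zero_le _) (Finset.mem_univ _)

variable (R : ReducedFA m T n x) (hm : 0 < m) (hT : 0 < T)

/-- parts of the baseline partition -/
def parts0 : Finset (Finset (Fin n)) :=
  insert (Ue R ∪ R.setClique ⟨0, hm⟩)
    ((Finset.univ.erase ⟨0, hm⟩).image R.setClique)

lemma big_not_mem_image (hx : ∀ h, 0 < x h) :
    Ue R ∪ R.setClique ⟨0, hm⟩ ∉ (Finset.univ.erase ⟨0, hm⟩).image R.setClique := by
  intro hmem
  rw [Finset.mem_image] at hmem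
  obtain ⟨k, _, hk⟩ := hmem
  obtain ⟨a, ha⟩ := Ue_nonempty R hm hx
  have haU : a ∈ R.setClique k := by
    rw [hk]
    exact Finset.mem_union.2 (Or.inl ha)
  exact Finset.disjoint_left.1 (disj_Ue_Us R) ha (setClique_sub_Us R k haU)

lemma setClique_injOn (hT' : 0 < T) :
    ∀ k ∈ (Finset.univ.erase (⟨0, hm⟩ : Fin m)), ∀ k' ∈ Finset.univ.erase ⟨0, hm⟩,
      R.setClique k = R.setClique k' → k = k' := by
  intro k _ k' _ heq
  by_contra hne
  have hd := R.set_disj k k' hne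
  rw [heq, disjoint_self, Finset.bot_eq_empty] at hd
  exact (setClique_nonempty R hm hT' k').ne_empty hd

/-- the baseline partition: one part with all elements plus set-clique 0,
and each remaining set clique its own part. -/
def pi0 : Finpartition (univ : Finset (Fin n)) where
  parts := parts0 R hm
  supIndep := by
    rw [Finset.supIndep_iff_pairwiseDisjoint]
    intro A hA B hB hAB
    simp only [Finset.coe_insert, Set.mem_insert_iff, Finset.mem_coe, Finset.mem_image,
      parts0, Finset.mem_coe, Finset.coe_image, Set.mem_image, Finset.mem_coe] at hA hB
    have hdisjUK : ∀ k : Fin m, k ≠ ⟨0, hm⟩ →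
        Disjoint (Ue R ∪ R.setClique ⟨0, hm⟩) (R.setClique k) := by
      intro k hk
      rw [Finset.disjoint_union_left]
      exact ⟨disj_Ue_set R k, R.set_disj _ k (fun h => hk h.symm)⟩
    rcases hA with hA | ⟨k, hk, rfl⟩ <;> rcases hB with hB | ⟨k', hk', rfl⟩
    · exact absurd (hA.trans hB.symm) hAB
    · subst hA
      exact hdisjUK k' (Finset.ne_of_mem_erase hk')
    · subst hB
      exact (hdisjUK k (Finset.ne_of_mem_erase hk)).symm
    · refine R.set_disj k k' fun h => hAB ?_
      subst h; rfl
  sup_parts := by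
    apply le_antisymm
    · exact Finset.sup_le fun C _ => Finset.le_iff_subset.2 (Finset.subset_univ C)
    · intro i _
      rw [Finset.mem_sup]
      have hi : i ∈ Ue R ∪ Us R := by rw [Ue_union_Us]; exact Finset.mem_univ i
      rcases Finset.mem_union.1 hi with hi | hi
      · exact ⟨_, Finset.mem_insert_self _ _, Finset.mem_union.2 (Or.inl hi)⟩
      · obtain ⟨k, hk⟩ := (mem_Us R).1 hi
        by_cases hk0 : k = ⟨0, hm⟩
        · subst hk0
          exact ⟨_, Finset.mem_insert_self _ _, Finset.mem_union.2 (Or.inr hk)⟩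
        · exact ⟨R.setClique k, Finset.mem_insert_of_mem
            (Finset.mem_image_of_mem _ (Finset.mem_erase.2 ⟨hk0, Finset.mem_univ k⟩)), hk⟩
  bot_notMem := by
    simp only [Finset.bot_eq_empty, parts0, Finset.mem_insert, Finset.mem_image]
    push_neg
    constructor
    · intro h
      have := setClique_nonempty R hm hT ⟨0, hm⟩
      rw [← Finset.card_pos] at this
      have : 0 < (Ue R ∪ R.setClique ⟨0, hm⟩).card :=
        lt_of_lt_of_le this (Finset.card_le_card (Finset.subset_union_right))
      rw [← h] at this
      simp at this
    · intro k _
      exact setClique_nonempty R hm hT k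

lemma sum_parts0 {M : Type*} [AddCommMonoid M] (hx : ∀ h, 0 < x h) (f : Finset (Fin n) → M) :
    ∑ C ∈ (pi0 R hm hT).parts, f C
      = f (Ue R ∪ R.setClique ⟨0, hm⟩) + ∑ k ∈ Finset.univ.erase ⟨0, hm⟩, f (R.setClique k) := by
  have h1 : (pi0 R hm hT).parts = parts0 R hm := rfl
  rw [h1, parts0, Finset.sum_insert (big_not_mem_image R hm hx),
    Finset.sum_image (setClique_injOn R hm hT)]

end Stmt11Aux
namespace Stmt11Aux
open Finset

variable {m T n : ℕ} {x : Fin (3*m) → ℕ} (R : ReducedFA m T n x)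

lemma opt_num (hn : 0 < n) (π σ : Finpartition (univ : Finset (Fin n)))
    (hopt : faSW n R.F σ ≤ faSW n R.F π) :
    ((n:ℚ)+1) * (∑ C ∈ σ.parts, (dC R C : ℚ)) - ∑ C ∈ σ.parts, ((C.card:ℚ))^2
      ≤ ((n:ℚ)+1) * (∑ C ∈ π.parts, (dC R C : ℚ)) - ∑ C ∈ π.parts, ((C.card:ℚ))^2 := by
  rw [faSW_eq R hn, faSW_eq R hn] at hopt
  have hn' : (0:ℚ) < n := by exact_mod_cast hn
  rw [div_le_div_iff_of_pos_right hn'] at hopt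
  linarith

lemma pi0_num_lower (hm1 : 0 < m) (hT : 0 < T) (hx0 : ∀ h, 0 < x h)
    (hsum : ∑ h, x h = m * T) (hn0 : 0 < n) :
    ((n:ℚ)+1) * ((m:ℚ)*(4*(m:ℚ)^2*T)^2 + (∑ h, ((x h:ℚ))^2) + 2*((m:ℚ)*T) - n)
      - ((4*(m:ℚ)^2*T + (m:ℚ)*T)^2 + ((m:ℚ)-1)*(4*(m:ℚ)^2*T)^2)
    ≤ ((n:ℚ)+1) * (∑ C ∈ (pi0 R hm1 hT).parts, (dC R C : ℚ))
      - ∑ C ∈ (pi0 R hm1 hT).parts, ((C.card:ℚ))^2 := by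
  have hcard_erase : (Finset.univ.erase (⟨0,hm1⟩ : Fin m)).card = m - 1 := by
    rw [Finset.card_erase_of_mem (Finset.mem_univ _), Finset.card_univ, Fintype.card_fin]
  have hUecard : (Ue R).card = m * T := by rw [card_Ue, hsum]
  have hbigcard : (Ue R ∪ R.setClique ⟨0,hm1⟩).card = m*T + 4*m^2*T := by
    rw [Finset.card_union_of_disjoint (disj_Ue_set R _), hUecard, R.set_card]
  -- natural-number lower bound on total friendships
  have hDnat : (4*m^2*T)^2 + 2*(m*T) + (∑ h, (x h)^2) + (m-1) * (4*m^2*T)^2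
      ≤ ∑ C ∈ (pi0 R hm1 hT).parts, (dC R C + C.card) := by
    rw [sum_parts0 R hm1 hT hx0]
    have h1 := dC_big_lower R ⟨0,hm1⟩
    rw [R.set_card, hUecard] at h1
    have h2 : ∀ k ∈ Finset.univ.erase (⟨0,hm1⟩ : Fin m),
        (4*m^2*T)^2 ≤ dC R (R.setClique k) + (R.setClique k).card := by
      intro k _
      rw [R.set_card]
      have := dC_set_lower R k
      rwa [R.set_card] at this
    have h3 := Finset.sum_le_sum h2
    rw [Finset.sum_const, hcard_erase, smul_eq_mul] at h3
    omega
  have hsumcard : ∑ C ∈ (pi0 R hm1 hT).parts, C.card = n := by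
    rw [(pi0 R hm1 hT).sum_card_parts, Finset.card_univ, Fintype.card_fin]
  have hDq : (m:ℚ)*(4*(m:ℚ)^2*T)^2 + (∑ h, ((x h:ℚ))^2) + 2*((m:ℚ)*T) - n
      ≤ ∑ C ∈ (pi0 R hm1 hT).parts, (dC R C : ℚ) := by
    have hd := (Nat.cast_le (α := ℚ)).2 hDnat
    have hm1' : (1:ℕ) ≤ m := hm1
    have hc : ∑ C ∈ (pi0 R hm1 hT).parts, ((C.card:ℚ)) = (n:ℚ) := by
      exact_mod_cast congrArg (fun z : ℕ => (z:ℚ)) hsumcard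
    push_cast [Nat.cast_sub hm1'] at hd
    rw [Finset.sum_add_distrib] at hd
    ring_nf at hd ⊢
    linarith
  have hPq : ∑ C ∈ (pi0 R hm1 hT).parts, ((C.card:ℚ))^2
      = (4*(m:ℚ)^2*T + (m:ℚ)*T)^2 + ((m:ℚ)-1)*(4*(m:ℚ)^2*T)^2 := by
    rw [sum_parts0 R hm1 hT hx0 (fun C => ((C.card:ℚ))^2), hbigcard]
    have : ∀ k ∈ Finset.univ.erase (⟨0,hm1⟩ : Fin m),
        (((R.setClique k).card : ℚ))^2 = (4*(m:ℚ)^2*T)^2 := by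
      intro k _
      rw [R.set_card]
      push_cast
      ring
    rw [Finset.sum_congr rfl this, Finset.sum_const, hcard_erase, nsmul_eq_mul]
    push_cast [Nat.cast_sub (Nat.one_le_iff_ne_zero.2 (Nat.pos_iff_ne_zero.1 hm1))]
    ring
  have hn' : (0:ℚ) < n := by exact_mod_cast hn0
  rw [hPq]
  have := mul_le_mul_of_nonneg_left hDq (by linarith : (0:ℚ) ≤ (n:ℚ)+1)
  linarith

/-- global upper bound on friendship count of an arbitrary partition -/
lemma D_upper_global (hsum : ∑ h, x h = m * T)
    (π : Finpartition (univ : Finset (Fin n))) :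
    (∑ C ∈ π.parts, dC R C) + n
      ≤ (∑ k, ∑ C ∈ π.parts, (C ∩ R.setClique k).card^2)
        + (∑ h, (x h)^2) + 2*(m*(m*T)) := by
  have h1 : ∀ C ∈ π.parts, dC R C + C.card
      ≤ (∑ k, (C ∩ R.setClique k).card ^ 2) + (∑ h, (C ∩ R.elemClique h).card ^ 2)
        + 2 * ∑ a ∈ C ∩ Ue R, ((C ∩ Us R) ∩ R.F a).card :=
    fun C _ => dC_upper R C
  have h2 := Finset.sum_le_sum h1
  rw [Finset.sum_add_distrib, π.sum_card_parts, Finset.card_univ, Fintype.card_fin] at h2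
  rw [Finset.sum_add_distrib, Finset.sum_add_distrib] at h2
  -- bound the element-square term
  have h3 : ∑ C ∈ π.parts, ∑ h, (C ∩ R.elemClique h).card ^ 2 ≤ ∑ h, (x h)^2 := by
    rw [Finset.sum_comm]
    refine Finset.sum_le_sum fun h _ => ?_
    calc ∑ C ∈ π.parts, (C ∩ R.elemClique h).card ^ 2
        ≤ (∑ C ∈ π.parts, (C ∩ R.elemClique h).card)^2 := sq_sum_le _ _
      _ = (x h)^2 := by rw [sum_part_inter π (R.elemClique h), R.elem_card h]
  -- bound the matching term
  have h4 : ∑ C ∈ π.parts, ∑ a ∈ C ∩ Ue R, ((C ∩ Us R) ∩ R.F a).card ≤ m*(m*T) := by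
    have h5 : ∀ C ∈ π.parts, ∑ a ∈ C ∩ Ue R, ((C ∩ Us R) ∩ R.F a).card
        ≤ (C ∩ Ue R).card * m := by
      intro C _
      calc ∑ a ∈ C ∩ Ue R, ((C ∩ Us R) ∩ R.F a).card
          ≤ ∑ a ∈ C ∩ Ue R, m := by
            refine Finset.sum_le_sum fun a ha => ?_
            have haUe : a ∈ Ue R := (Finset.mem_inter.1 ha).2
            calc ((C ∩ Us R) ∩ R.F a).card ≤ (Us R ∩ R.F a).card :=
                  Finset.card_le_card (fun t ht => by
                    rcases Finset.mem_inter.1 ht with ⟨ht1, ht2⟩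
                    exact Finset.mem_inter.2 ⟨(Finset.mem_inter.1 ht1).2, ht2⟩)
              _ = m := elem_us_friends R haUe
        _ = (C ∩ Ue R).card * m := by rw [Finset.sum_const, smul_eq_mul]
    calc ∑ C ∈ π.parts, ∑ a ∈ C ∩ Ue R, ((C ∩ Us R) ∩ R.F a).card
        ≤ ∑ C ∈ π.parts, (C ∩ Ue R).card * m := Finset.sum_le_sum h5
      _ = (∑ C ∈ π.parts, (C ∩ Ue R).card) * m := by rw [Finset.sum_mul]
      _ = (m*T) * m := by rw [sum_part_inter π (Ue R), card_Ue, hsum]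
      _ = m*(m*T) := by ring
  have h6 : ∑ C ∈ π.parts, ∑ k, (C ∩ R.setClique k).card ^ 2
      = ∑ k, ∑ C ∈ π.parts, (C ∩ R.setClique k).card ^ 2 := Finset.sum_comm
  have h7 : ∑ C ∈ π.parts, 2 * (∑ a ∈ C ∩ Ue R, ((C ∩ Us R) ∩ R.F a).card)
      = 2 * ∑ C ∈ π.parts, ∑ a ∈ C ∩ Ue R, ((C ∩ Us R) ∩ R.F a).card := by
    rw [Finset.mul_sum]
  omega

lemma P_lower_global (π : Finpartition (univ : Finset (Fin n))) :
    (∑ k, ∑ C ∈ π.parts, (C ∩ R.setClique k).card^2) ≤ ∑ C ∈ π.parts, C.card^2 := by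
  rw [Finset.sum_comm]
  refine Finset.sum_le_sum fun C _ => ?_
  calc ∑ k, (C ∩ R.setClique k).card ^ 2
      ≤ (∑ k, (C ∩ R.setClique k).card)^2 := sq_sum_le _ _
    _ = ((C ∩ Us R).card)^2 := by rw [card_Us_split]
    _ ≤ C.card^2 := Nat.pow_le_pow_left (Finset.card_le_card Finset.inter_subset_left) 2

lemma Ak_le (π : Finpartition (univ : Finset (Fin n))) (k : Fin m) :
    ∑ C ∈ π.parts, (C ∩ R.setClique k).card^2 ≤ ((4:ℕ)*m^2*T)^2 := by
  calc ∑ C ∈ π.parts, (C ∩ R.setClique k).card ^ 2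
      ≤ (∑ C ∈ π.parts, (C ∩ R.setClique k).card)^2 := sq_sum_le _ _
    _ = ((4:ℕ)*m^2*T)^2 := by rw [sum_part_inter π (R.setClique k), R.set_card]

lemma Ak_le_of_not_whole (π : Finpartition (univ : Finset (Fin n))) (k : Fin m)
    (hno : ∀ C ∈ π.parts, ¬ R.setClique k ⊆ C) :
    ∑ C ∈ π.parts, (C ∩ R.setClique k).card^2 ≤ (4*m^2*T - 1) * (4*m^2*T) := by
  have hlt : ∀ C ∈ π.parts, (C ∩ R.setClique k).card ≤ 4*m^2*T - 1 := by
    intro C hC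
    have hss : C ∩ R.setClique k ⊂ R.setClique k := by
      refine Finset.ssubset_iff_subset_ne.2 ⟨Finset.inter_subset_right, fun heq => ?_⟩
      refine hno C hC (fun t ht => ?_)
      rw [← heq] at ht
      exact (Finset.mem_inter.1 ht).1
    have := Finset.card_lt_card hss
    rw [R.set_card] at this
    omega
  calc ∑ C ∈ π.parts, (C ∩ R.setClique k).card ^ 2
      ≤ ∑ C ∈ π.parts, (4*m^2*T - 1) * (C ∩ R.setClique k).card := by
        refine Finset.sum_le_sum fun C hC => ?_
        rw [pow_two]
        exact Nat.mul_le_mul_right _ (hlt C hC)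
    _ = (4*m^2*T - 1) * (4*m^2*T) := by
        rw [← Finset.mul_sum, sum_part_inter π (R.setClique k), R.set_card]

end Stmt11Aux
namespace Stmt11Aux
open Finset

variable {m T n : ℕ} {x : Fin (3*m) → ℕ} (R : ReducedFA m T n x)

set_option maxHeartbeats 2000000 in
lemma step1 (hm : 1 < m) (hT : 0 < T)
    (hsum : ∑ h, x h = m * T)
    (hx : ∀ h, T < 4 * x h ∧ 2 * x h < T)
    (hn : n = m * T + 4 * m ^ 3 * T)
    (π : Finpartition (univ : Finset (Fin n)))
    (hopt : ∀ σ : Finpartition (univ : Finset (Fin n)), faSW n R.F σ ≤ faSW n R.F π) :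
    ∀ k, ∃ C ∈ π.parts, R.setClique k ⊆ C := by
  intro k
  by_contra hno
  push_neg at hno
  have hm1 : 0 < m := lt_trans one_pos hm
  have hx0 : ∀ h, 0 < x h := fun h => by have := (hx h).1; omega
  have hn0 : 0 < n := by
    rw [hn]
    have : 0 < m * T := Nat.mul_pos hm1 hT
    omega
  have hXpos : 0 < 4*m^2*T := by positivity
  -- natural-number bound on ∑_k A_k
  have hSAnat : (∑ k', ∑ C ∈ π.parts, (C ∩ R.setClique k').card^2)
      ≤ (4*m^2*T - 1) * (4*m^2*T) + (m-1) * (4*m^2*T)^2 := by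
    rw [← Finset.sum_erase_add _ _ (Finset.mem_univ k)]
    have h1 : ∑ k' ∈ Finset.univ.erase k, ∑ C ∈ π.parts, (C ∩ R.setClique k').card^2
        ≤ (m-1) * (4*m^2*T)^2 := by
      calc ∑ k' ∈ Finset.univ.erase k, ∑ C ∈ π.parts, (C ∩ R.setClique k').card^2
          ≤ ∑ _k' ∈ Finset.univ.erase k, (4*m^2*T)^2 :=
            Finset.sum_le_sum fun k' _ => Ak_le R π k'
        _ = (m-1) * (4*m^2*T)^2 := by
            rw [Finset.sum_const, Finset.card_erase_of_mem (Finset.mem_univ _),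
              Finset.card_univ, Fintype.card_fin, smul_eq_mul]
    have h2 := Ak_le_of_not_whole R π k hno
    omega
  -- rational setup
  have h0 := pi0_num_lower R hm1 hT hx0 hsum hn0
  have hoptq := opt_num R hn0 π (pi0 R hm1 hT) (hopt _)
  have e1 := h0.trans hoptq
  set DP := ∑ C ∈ π.parts, (dC R C : ℚ) with hDP
  set PP := ∑ C ∈ π.parts, ((C.card:ℚ))^2 with hPP
  set SA := ((∑ k', ∑ C ∈ π.parts, (C ∩ R.setClique k').card^2 : ℕ) : ℚ) with hSA
  set Qq := ∑ h, ((x h:ℚ))^2 with hQq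
  have hQqe : ((∑ h, (x h)^2 : ℕ) : ℚ) = Qq := by push_cast; rfl
  have hM : (2:ℚ) ≤ (m:ℚ) := by exact_mod_cast hm
  have ht1 : (1:ℚ) ≤ (T:ℚ) := by exact_mod_cast hT
  have hNval : (n:ℚ) = (m:ℚ)*T + 4*(m:ℚ)^3*T := by
    rw [hn]; push_cast; ring
  have hNpos : (0:ℚ) < (n:ℚ) := by exact_mod_cast hn0
  -- cast the three global bounds
  have hDub : DP + (n:ℚ) ≤ SA + Qq + 2*((m:ℚ)*((m:ℚ)*T)) := by
    have := (Nat.cast_le (α := ℚ)).2 (D_upper_global R hsum π)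
    push_cast at this
    rw [hDP, hSA, hQq]
    push_cast
    linarith
  have hPlb : SA ≤ PP := by
    have := (Nat.cast_le (α := ℚ)).2 (P_lower_global R π)
    rw [hSA, hPP]
    push_cast at this ⊢
    linarith
  have hSAub : SA ≤ (m:ℚ)*(4*(m:ℚ)^2*T)^2 - 4*(m:ℚ)^2*T := by
    have hc := (Nat.cast_le (α := ℚ)).2 hSAnat
    have h1 : (1:ℕ) ≤ 4*m^2*T := hXpos
    have h2 : (1:ℕ) ≤ m := hm1
    push_cast [Nat.cast_sub h1, Nat.cast_sub h2] at hc
    rw [hSA]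
    push_cast
    nlinarith [hc]
  -- combine
  have e2 : ((n:ℚ)+1) * DP ≤ ((n:ℚ)+1) * (SA + Qq + 2*((m:ℚ)*((m:ℚ)*T)) - (n:ℚ)) := by
    have h3 : DP ≤ SA + Qq + 2*((m:ℚ)*((m:ℚ)*T)) - (n:ℚ) := by linarith
    exact mul_le_mul_of_nonneg_left h3 (by linarith)
  have e3 : (n:ℚ) * SA ≤ (n:ℚ) * ((m:ℚ)*(4*(m:ℚ)^2*T)^2 - 4*(m:ℚ)^2*T) :=
    mul_le_mul_of_nonneg_left hSAub (le_of_lt hNpos)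
  -- final polynomial contradiction
  set M := (m:ℚ)
  set t := (T:ℚ)
  have hMpos : (0:ℚ) < M := by linarith
  have htpos : (0:ℚ) < t := by linarith
  nlinarith [e1, e2, e3, hPlb, hNval, hM, ht1, hNpos,
    mul_pos hMpos htpos, sq_nonneg (M*t), sq_nonneg M, sq_nonneg t,
    mul_nonneg (mul_nonneg (sub_nonneg.2 hM) (pow_pos hMpos 3).le) (sq_nonneg t),
    mul_nonneg (mul_nonneg (sub_nonneg.2 ht1) (pow_pos hMpos 2).le) htpos.le,
    mul_pos (mul_pos hMpos hMpos) htpos,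
    mul_nonneg (mul_nonneg (sub_nonneg.2 hM) (pow_pos hMpos 4).le) (sq_nonneg t)]

end Stmt11Aux
namespace Stmt11Aux
open Finset

variable {m T n : ℕ} {x : Fin (3*m) → ℕ} (R : ReducedFA m T n x)

/-- number of set cliques contained in a coalition -/
def qC (C : Finset (Fin n)) : ℕ := (Finset.univ.filter fun k => R.setClique k ⊆ C).card

variable (π : Finpartition (univ : Finset (Fin n)))

lemma part_set_cases (hwhole : ∀ k, ∃ C ∈ π.parts, R.setClique k ⊆ C)
    {C : Finset (Fin n)} (hC : C ∈ π.parts) (k : Fin m) :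
    R.setClique k ⊆ C ∨ C ∩ R.setClique k = ∅ := by
  obtain ⟨C', hC', hsub⟩ := hwhole k
  by_cases heq : C = C'
  · subst heq; exact Or.inl hsub
  · right
    rw [Finset.eq_empty_iff_forall_notMem]
    intro t ht
    rcases Finset.mem_inter.1 ht with ⟨ht1, ht2⟩
    exact heq (π.eq_of_mem_parts hC hC' ht1 (hsub ht2))

lemma card_inter_set (hX : 0 < 4*m^2*T)
    (hwhole : ∀ k, ∃ C ∈ π.parts, R.setClique k ⊆ C)
    {C : Finset (Fin n)} (hC : C ∈ π.parts) (k : Fin m) :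
    (C ∩ R.setClique k).card = if R.setClique k ⊆ C then 4*m^2*T else 0 := by
  rcases part_set_cases R π hwhole hC k with hsub | hemp
  · rw [if_pos hsub, Finset.inter_eq_right.2 hsub, R.set_card]
  · have hnsub : ¬ R.setClique k ⊆ C := by
      intro hsub
      have h1 : C ∩ R.setClique k = R.setClique k := Finset.inter_eq_right.2 hsub
      rw [hemp] at h1
      have h2 := congrArg Finset.card h1
      rw [Finset.card_empty, R.set_card] at h2
      omega
    rw [hemp, if_neg hnsub, Finset.card_empty]

lemma card_CUs (hX : 0 < 4*m^2*T)
    (hwhole : ∀ k, ∃ C ∈ π.parts, R.setClique k ⊆ C)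
    {C : Finset (Fin n)} (hC : C ∈ π.parts) :
    (C ∩ Us R).card = qC R C * (4*m^2*T) := by
  rw [card_Us_split, Finset.sum_congr rfl
    (fun k _ => card_inter_set R π hX hwhole hC k), Finset.sum_ite, Finset.sum_const,
    Finset.sum_const_zero, add_zero, smul_eq_mul, qC]

lemma sum_sq_us (hX : 0 < 4*m^2*T)
    (hwhole : ∀ k, ∃ C ∈ π.parts, R.setClique k ⊆ C)
    {C : Finset (Fin n)} (hC : C ∈ π.parts) :
    ∑ k, (C ∩ R.setClique k).card^2 = qC R C * (4*m^2*T)^2 := by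
  have : ∀ k : Fin m, (C ∩ R.setClique k).card^2
      = if R.setClique k ⊆ C then (4*m^2*T)^2 else 0 := by
    intro k
    rw [card_inter_set R π hX hwhole hC k]
    split <;> simp
  rw [Finset.sum_congr rfl (fun k _ => this k), Finset.sum_ite, Finset.sum_const,
    Finset.sum_const_zero, add_zero, smul_eq_mul, qC]

lemma mt_le (hX : 0 < 4*m^2*T) (hwhole : ∀ k, ∃ C ∈ π.parts, R.setClique k ⊆ C)
    {C : Finset (Fin n)} (hC : C ∈ π.parts) :
    ∑ a ∈ C ∩ Ue R, ((C ∩ Us R) ∩ R.F a).card ≤ (C ∩ Ue R).card * qC R C := by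
  have hptw : ∀ a ∈ C ∩ Ue R, ((C ∩ Us R) ∩ R.F a).card ≤ qC R C := by
    intro a ha
    obtain ⟨h, hah⟩ := (mem_Ue R).1 (Finset.mem_inter.1 ha).2
    have heq : (C ∩ Us R) ∩ R.F a = (C ∩ R.F a) ∩ Us R := by
      rw [Finset.inter_right_comm]
    rw [heq, card_Us_split]
    have hterm : ∀ k : Fin m, ((C ∩ R.F a) ∩ R.setClique k).card
        ≤ if R.setClique k ⊆ C then 1 else 0 := by
      intro k
      rcases part_set_cases R π hwhole hC k with hsub | hemp
      · rw [if_pos hsub, ← R.matching h k a hah]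
        refine Finset.card_le_card fun t ht => ?_
        simp only [Finset.mem_inter] at ht ⊢
        exact ⟨ht.2, ht.1.2⟩
      · rw [if_neg, Finset.card_eq_zero.2]
        · rw [← Finset.subset_empty, ← hemp]
          intro t ht
          simp only [Finset.mem_inter] at ht ⊢
          exact ⟨ht.1.1, ht.2⟩
        · intro hsub
          have h1 : C ∩ R.setClique k = R.setClique k := Finset.inter_eq_right.2 hsub
          rw [hemp] at h1
          have h2 := congrArg Finset.card h1
          rw [Finset.card_empty, R.set_card] at h2
          omega
    calc ∑ k, ((C ∩ R.F a) ∩ R.setClique k).card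
        ≤ ∑ k, (if R.setClique k ⊆ C then 1 else 0) := Finset.sum_le_sum fun k _ => hterm k
      _ = qC R C := by
          rw [Finset.sum_ite, Finset.sum_const, Finset.sum_const_zero, add_zero,
            smul_eq_mul, mul_one, qC]
  calc ∑ a ∈ C ∩ Ue R, ((C ∩ Us R) ∩ R.F a).card
      ≤ ∑ _a ∈ C ∩ Ue R, qC R C := Finset.sum_le_sum hptw
    _ = (C ∩ Ue R).card * qC R C := by rw [Finset.sum_const, smul_eq_mul]

lemma sum_q (hX : 0 < 4*m^2*T)
    (hwhole : ∀ k, ∃ C ∈ π.parts, R.setClique k ⊆ C) :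
    ∑ C ∈ π.parts, qC R C = m := by
  have h1 : ∀ C, qC R C = ∑ k : Fin m, if R.setClique k ⊆ C then 1 else 0 := by
    intro C
    rw [qC, Finset.card_filter]
  have h2 : ∀ k : Fin m, ∑ C ∈ π.parts, (if R.setClique k ⊆ C then 1 else 0) = 1 := by
    intro k
    obtain ⟨P, hP, hsubP⟩ := hwhole k
    have hfil : π.parts.filter (fun C => R.setClique k ⊆ C) = {P} := by
      ext D
      simp only [Finset.mem_filter, Finset.mem_singleton]
      constructor
      · rintro ⟨hD, hsubD⟩
        obtain ⟨a, ha⟩ : (R.setClique k).Nonempty := by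
          rw [← Finset.card_pos, R.set_card]; exact hX
        exact π.eq_of_mem_parts hD hP (hsubD ha) (hsubP ha)
      · rintro rfl; exact ⟨hP, hsubP⟩
    rw [← Finset.sum_filter, hfil, Finset.sum_singleton]
  rw [Finset.sum_congr rfl (fun C _ => h1 C), Finset.sum_comm,
    Finset.sum_congr rfl (fun k _ => h2 k), Finset.sum_const, Finset.card_univ,
    Fintype.card_fin, smul_eq_mul, mul_one]

lemma Bh_le (h : Fin (3*m)) :
    ∑ C ∈ π.parts, (C ∩ R.elemClique h).card^2 ≤ (x h)^2 := by
  calc ∑ C ∈ π.parts, (C ∩ R.elemClique h).card ^ 2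
      ≤ (∑ C ∈ π.parts, (C ∩ R.elemClique h).card)^2 := sq_sum_le _ _
    _ = (x h)^2 := by rw [sum_part_inter π (R.elemClique h), R.elem_card h]

lemma Bh_le_of_not_whole (h : Fin (3*m))
    (hno : ∀ C ∈ π.parts, ¬ R.elemClique h ⊆ C) :
    ∑ C ∈ π.parts, (C ∩ R.elemClique h).card^2 ≤ (x h - 1) * (x h) := by
  have hlt : ∀ C ∈ π.parts, (C ∩ R.elemClique h).card ≤ x h - 1 := by
    intro C hC
    have hss : C ∩ R.elemClique h ⊂ R.elemClique h := by
      refine Finset.ssubset_iff_subset_ne.2 ⟨Finset.inter_subset_right, fun heq => ?_⟩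
      refine hno C hC (fun t ht => ?_)
      rw [← heq] at ht
      exact (Finset.mem_inter.1 ht).1
    have := Finset.card_lt_card hss
    rw [R.elem_card h] at this
    omega
  calc ∑ C ∈ π.parts, (C ∩ R.elemClique h).card ^ 2
      ≤ ∑ C ∈ π.parts, (x h - 1) * (C ∩ R.elemClique h).card := by
        refine Finset.sum_le_sum fun C hC => ?_
        rw [pow_two]
        exact Nat.mul_le_mul_right _ (hlt C hC)
    _ = (x h - 1) * (x h) := by
        rw [← Finset.mul_sum, sum_part_inter π (R.elemClique h), R.elem_card h]

/-- global friendship bound using whole set cliques -/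
lemma D_upper_whole (hX : 0 < 4*m^2*T)
    (hwhole : ∀ k, ∃ C ∈ π.parts, R.setClique k ⊆ C) :
    (∑ C ∈ π.parts, dC R C) + n
      ≤ m * (4*m^2*T)^2 + (∑ C ∈ π.parts, ∑ h, (C ∩ R.elemClique h).card^2)
        + 2 * ∑ C ∈ π.parts, (C ∩ Ue R).card * qC R C := by
  have h1 : ∀ C ∈ π.parts, dC R C + C.card
      ≤ qC R C * (4*m^2*T)^2 + (∑ h, (C ∩ R.elemClique h).card ^ 2)
        + 2 * ((C ∩ Ue R).card * qC R C) := by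
    intro C hC
    have := dC_upper R C
    rw [sum_sq_us R π hX hwhole hC] at this
    have h2 := mt_le R π hX hwhole hC
    omega
  have h2 := Finset.sum_le_sum h1
  rw [Finset.sum_add_distrib, π.sum_card_parts, Finset.card_univ, Fintype.card_fin] at h2
  rw [Finset.sum_add_distrib, Finset.sum_add_distrib] at h2
  have h3 : ∑ C ∈ π.parts, qC R C * (4*m^2*T)^2 = m * (4*m^2*T)^2 := by
    rw [← Finset.sum_mul, sum_q R π hX hwhole]
  have h4 : ∑ C ∈ π.parts, 2 * ((C ∩ Ue R).card * qC R C)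
      = 2 * ∑ C ∈ π.parts, (C ∩ Ue R).card * qC R C := by
    rw [Finset.mul_sum]
  omega

lemma card_part_split (hX : 0 < 4*m^2*T)
    (hwhole : ∀ k, ∃ C ∈ π.parts, R.setClique k ⊆ C)
    {C : Finset (Fin n)} (hC : C ∈ π.parts) :
    C.card = (C ∩ Ue R).card + qC R C * (4*m^2*T) := by
  rw [card_C_split R C, card_CUs R π hX hwhole hC]

end Stmt11Aux
namespace Stmt11Aux
open Finset

variable {m T n : ℕ} {x : Fin (3*m) → ℕ} (R : ReducedFA m T n x)

set_option maxHeartbeats 4000000 in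
lemma main_structure (hm : 1 < m) (hT : 0 < T)
    (hsum : ∑ h, x h = m * T)
    (hx : ∀ h, T < 4 * x h ∧ 2 * x h < T)
    (hn : n = m * T + 4 * m ^ 3 * T)
    (π : Finpartition (univ : Finset (Fin n)))
    (hopt : ∀ σ : Finpartition (univ : Finset (Fin n)), faSW n R.F σ ≤ faSW n R.F π) :
    (∀ C ∈ π.parts, qC R C = 1) ∧ (∀ h, ∃ C ∈ π.parts, R.elemClique h ⊆ C) := by
  have hm1 : 0 < m := lt_trans one_pos hm
  have hx0 : ∀ h, 0 < x h := fun h => by have := (hx h).1; omega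
  have hn0 : 0 < n := by
    rw [hn]
    have : 0 < m * T := Nat.mul_pos hm1 hT
    omega
  have hX : 0 < 4*m^2*T := by positivity
  have hwhole := step1 R hm hT hsum hx hn π hopt
  -- rational quantities
  have e1 := (pi0_num_lower R hm1 hT hx0 hsum hn0).trans
    (opt_num R hn0 π (pi0 R hm1 hT) (hopt _))
  set DP := ∑ C ∈ π.parts, (dC R C : ℚ) with hDPdef
  set PP := ∑ C ∈ π.parts, ((C.card:ℚ))^2 with hPPdef
  set Xq := 4*(m:ℚ)^2*(T:ℚ) with hXqdef
  set Sq := (m:ℚ)*(T:ℚ) with hSqdef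
  set N := (n:ℚ) with hNdef
  set M := (m:ℚ) with hMdef
  set t := (T:ℚ) with htdef
  set Qq := ∑ h, ((x h:ℚ))^2 with hQqdef
  set BB := ∑ C ∈ π.parts, ∑ h, (((C ∩ R.elemClique h).card : ℚ))^2 with hBBdef
  set YY := ∑ C ∈ π.parts, (((C ∩ Ue R).card : ℚ))^2 with hYYdef
  set QQ := ∑ C ∈ π.parts, ((qC R C : ℚ))^2 with hQQdef
  set QY := ∑ C ∈ π.parts, (((C ∩ Ue R).card : ℚ)) * ((qC R C : ℚ)) with hQYdef
  have hM2 : (2:ℚ) ≤ M := by rw [hMdef]; exact_mod_cast hm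
  have ht1 : (1:ℚ) ≤ t := by rw [htdef]; exact_mod_cast hT
  have hMpos : (0:ℚ) < M := by linarith
  have htpos : (0:ℚ) < t := by linarith
  have hNval : N = M*t + 4*M^3*t := by
    rw [hNdef, hn, hMdef, htdef]; push_cast; ring
  have hNX : Xq ≤ N := by rw [hXqdef, hNval]; nlinarith
  have hNpos : (0:ℚ) < N := by rw [hNdef]; exact_mod_cast hn0
  -- sum of q
  have hq_sum : ∑ C ∈ π.parts, ((qC R C : ℚ)) = M := by
    rw [hMdef]
    exact_mod_cast congrArg (fun z : ℕ => (z:ℚ)) (sum_q R π hX hwhole)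
  -- sum of y
  have hy_sum : ∑ C ∈ π.parts, (((C ∩ Ue R).card : ℚ)) = Sq := by
    have h1 : ∑ C ∈ π.parts, (C ∩ Ue R).card = m * T := by
      rw [sum_part_inter π (Ue R), card_Ue, hsum]
    rw [hSqdef, hMdef, htdef]
    exact_mod_cast congrArg (fun z : ℕ => (z:ℚ)) h1
  -- pointwise y ≤ S
  have hy_le : ∀ C ∈ π.parts, (((C ∩ Ue R).card : ℚ)) ≤ Sq := by
    intro C hC
    have h1 : (C ∩ Ue R).card ≤ m*T := by
      calc (C ∩ Ue R).card ≤ (Ue R).card := Finset.card_le_card Finset.inter_subset_right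
        _ = m*T := by rw [card_Ue, hsum]
    rw [hSqdef, hMdef, htdef]
    exact_mod_cast h1
  -- (D1)
  have hD1 : DP + N ≤ M*Xq^2 + BB + 2*QY := by
    have h1 := (Nat.cast_le (α := ℚ)).2 (D_upper_whole R π hX hwhole)
    rw [hDPdef, hNdef, hBBdef, hQYdef, hMdef, hXqdef, htdef]
    push_cast at h1 ⊢
    linarith
  -- (P1)
  have hP1 : PP = YY + 2*Xq*QY + Xq^2*QQ := by
    have hptw : ∀ C ∈ π.parts, ((C.card:ℚ))^2
        = (((C ∩ Ue R).card:ℚ))^2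
          + 2*Xq*((((C ∩ Ue R).card:ℚ)) * ((qC R C:ℚ)))
          + Xq^2*((qC R C:ℚ))^2 := by
      intro C hC
      have h1 : (C.card : ℚ) = ((C ∩ Ue R).card:ℚ) + ((qC R C:ℚ)) * Xq := by
        have := card_part_split R π hX hwhole hC
        rw [hXqdef, htdef, hMdef]
        push_cast [this]
        ring
      rw [h1]; ring
    rw [hPPdef, Finset.sum_congr rfl hptw, Finset.sum_add_distrib, Finset.sum_add_distrib,
      ← Finset.mul_sum, ← Finset.mul_sum, hYYdef, hQYdef, hQQdef]
  -- (B1)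
  have hB1 : BB ≤ Qq := by
    have h1 : (∑ C ∈ π.parts, ∑ h, (C ∩ R.elemClique h).card^2) ≤ ∑ h, (x h)^2 := by
      rw [Finset.sum_comm]
      exact Finset.sum_le_sum fun h _ => Bh_le R π h
    rw [hBBdef, hQqdef]
    exact_mod_cast h1
  -- QQ ≥ M
  have hQQge : M ≤ QQ := by
    have h1 : (∑ C ∈ π.parts, qC R C) ≤ ∑ C ∈ π.parts, qC R C * qC R C := by
      refine Finset.sum_le_sum fun C _ => ?_
      rcases Nat.eq_zero_or_pos (qC R C) with h|h
      · simp [h]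
      · calc qC R C = qC R C * 1 := (mul_one _).symm
          _ ≤ qC R C * qC R C := Nat.mul_le_mul_left _ h
    rw [sum_q R π hX hwhole] at h1
    have h2 : ((m:ℕ):ℚ) ≤ ((∑ C ∈ π.parts, qC R C * qC R C : ℕ):ℚ) := by exact_mod_cast h1
    rw [hQQdef, hMdef]
    push_cast at h2
    calc (m:ℚ) ≤ ∑ C ∈ π.parts, ((qC R C:ℚ)) * ((qC R C:ℚ)) := h2
      _ = ∑ C ∈ π.parts, ((qC R C:ℚ))^2 := by
          exact Finset.sum_congr rfl fun C _ => (pow_two _).symm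
  -- the key inequality (K)
  have hK : (N+1)*(Qq - BB) + YY + Xq^2*(QQ - M) + 2*(Sq - QY)*(N+1-Xq) ≤ Sq^2 := by
    have e2 : (N+1)*DP ≤ (N+1)*(M*Xq^2 + BB + 2*QY - N) :=
      mul_le_mul_of_nonneg_left (by linarith) (by linarith)
    nlinarith [e1, e2, hP1]
  -- YY nonneg
  have hYYnn : (0:ℚ) ≤ YY := by
    rw [hYYdef]
    exact Finset.sum_nonneg fun C _ => sq_nonneg _
  -- elimination A : all parts contain at most one set clique
  have hqle1 : ∀ C ∈ π.parts, qC R C ≤ 1 := by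
    by_contra hcon
    push_neg at hcon
    obtain ⟨C0, hC0, hq2⟩ := hcon
    -- ∑ q² ≥ m + 2 in ℕ
    have hsum2 : m + 2 ≤ ∑ C ∈ π.parts, qC R C * qC R C := by
      have hsplit1 : ∑ C ∈ π.parts.erase C0, qC R C + qC R C0 = m := by
        rw [Finset.sum_erase_add _ _ hC0, sum_q R π hX hwhole]
      have h2 : qC R C0 + 2 ≤ qC R C0 * qC R C0 := by nlinarith
      have h3 : ∑ C ∈ π.parts.erase C0, qC R C ≤ ∑ C ∈ π.parts.erase C0, qC R C * qC R C := by
        refine Finset.sum_le_sum fun C _ => ?_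
        rcases Nat.eq_zero_or_pos (qC R C) with h|h
        · simp [h]
        · calc qC R C = qC R C * 1 := (mul_one _).symm
            _ ≤ qC R C * qC R C := Nat.mul_le_mul_left _ h
      have h4 : ∑ C ∈ π.parts.erase C0, qC R C * qC R C + qC R C0 * qC R C0
          = ∑ C ∈ π.parts, qC R C * qC R C := Finset.sum_erase_add _ _ hC0
      omega
    have hP2 : M + 2 ≤ QQ := by
      have h2 : ((m + 2:ℕ):ℚ) ≤ ((∑ C ∈ π.parts, qC R C * qC R C : ℕ):ℚ) := by
        exact_mod_cast hsum2
      rw [hQQdef, hMdef]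
      push_cast at h2
      calc (m:ℚ) + 2 ≤ ∑ C ∈ π.parts, ((qC R C:ℚ)) * ((qC R C:ℚ)) := h2
        _ = ∑ C ∈ π.parts, ((qC R C:ℚ))^2 :=
            Finset.sum_congr rfl fun C _ => (pow_two _).symm
    -- QY - Sq ≤ Sq * (QQ - M)
    have hK7 : QY - Sq ≤ Sq * (QQ - M) := by
      have hlhs : QY - Sq = ∑ C ∈ π.parts,
          ((((C ∩ Ue R).card : ℚ)) * ((qC R C : ℚ)) - (((C ∩ Ue R).card : ℚ))) := by
        rw [Finset.sum_sub_distrib, hy_sum, hQYdef]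
      have hrhs : Sq * (QQ - M) = ∑ C ∈ π.parts,
          (Sq * (((qC R C : ℚ))^2 - ((qC R C : ℚ)))) := by
        rw [← Finset.mul_sum, Finset.sum_sub_distrib, hq_sum, hQQdef]
      rw [hlhs, hrhs]
      refine Finset.sum_le_sum fun C hC => ?_
      have hyC : (0:ℚ) ≤ (((C ∩ Ue R).card : ℚ)) := by positivity
      have hySq := hy_le C hC
      have hSqpos : (0:ℚ) < Sq := by rw [hSqdef]; positivity
      rcases Nat.eq_zero_or_pos (qC R C) with h|h
      · simp [h]
      · have hq1 : (1:ℚ) ≤ ((qC R C:ℚ)) := by exact_mod_cast h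
        nlinarith [mul_le_mul_of_nonneg_right hySq
            (by linarith : (0:ℚ) ≤ ((qC R C:ℚ)) - 1),
          mul_nonneg (mul_nonneg hSqpos.le
            (by linarith : (0:ℚ) ≤ ((qC R C:ℚ)) - 1))
            (by linarith : (0:ℚ) ≤ ((qC R C:ℚ)) - 1)]
    have e4 : 2*(QY - Sq)*(N+1-Xq) ≤ 2*(Sq*(QQ-M))*(N+1-Xq) := by
      have := mul_le_mul_of_nonneg_right hK7 (by linarith : (0:ℚ) ≤ N+1-Xq)
      linarith
    have hF : Sq^2 < 2*(Xq^2 - 2*Sq*(N+1-Xq)) := by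
      rw [hXqdef, hSqdef, hNval]
      nlinarith [mul_pos hMpos htpos, sq_nonneg (M*t), mul_pos (mul_pos hMpos hMpos) htpos,
        mul_nonneg (mul_nonneg (sub_nonneg.2 hM2) (pow_pos hMpos 3).le) (sq_nonneg t),
        mul_nonneg (mul_nonneg (sub_nonneg.2 ht1) (pow_pos hMpos 2).le) htpos.le]
    have hcontr : (QQ-M)*(Xq^2 - 2*Sq*(N+1-Xq)) ≤ Sq^2 := by nlinarith [hK, e4, hB1, hYYnn]
    nlinarith [hcontr, hF, hP2, mul_nonneg (by linarith : (0:ℚ) ≤ QQ - M - 2)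
      (by nlinarith [hF] : (0:ℚ) ≤ Xq^2 - 2*Sq*(N+1-Xq))]
  -- Sq - QY ≥ 0 pointwise facts
  have hSQYptw : ∀ C ∈ π.parts, (0:ℚ) ≤ (((C ∩ Ue R).card : ℚ))
      - (((C ∩ Ue R).card : ℚ)) * ((qC R C : ℚ)) := by
    intro C hC
    have h1 : ((qC R C : ℚ)) ≤ 1 := by exact_mod_cast hqle1 C hC
    have hyC : (0:ℚ) ≤ (((C ∩ Ue R).card : ℚ)) := by positivity
    nlinarith
  have hSQY : (0:ℚ) ≤ Sq - QY := by
    have h1 : Sq - QY = ∑ C ∈ π.parts,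
        ((((C ∩ Ue R).card : ℚ)) - (((C ∩ Ue R).card : ℚ)) * ((qC R C : ℚ))) := by
      rw [Finset.sum_sub_distrib, hy_sum, hQYdef]
    rw [h1]
    exact Finset.sum_nonneg hSQYptw
  -- elimination B : every element clique is whole
  have helem : ∀ h, ∃ C ∈ π.parts, R.elemClique h ⊆ C := by
    by_contra hcon
    push_neg at hcon
    obtain ⟨h0, hno⟩ := hcon
    have hBBn : (∑ C ∈ π.parts, ∑ h, (C ∩ R.elemClique h).card^2) + x h0 ≤ ∑ h, (x h)^2 := by
      rw [Finset.sum_comm]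
      have h1 : ∑ C ∈ π.parts, (C ∩ R.elemClique h0).card^2 ≤ (x h0 - 1) * x h0 :=
        Bh_le_of_not_whole R π h0 hno
      have h2 : ∑ h ∈ Finset.univ.erase h0, ∑ C ∈ π.parts, (C ∩ R.elemClique h).card^2
          ≤ ∑ h ∈ Finset.univ.erase h0, (x h)^2 :=
        Finset.sum_le_sum fun h _ => Bh_le R π h
      have h3 : ∑ h ∈ Finset.univ.erase h0, (x h)^2 + (x h0)^2 = ∑ h, (x h)^2 :=
        Finset.sum_erase_add _ _ (Finset.mem_univ h0)
      have h4 : ∑ h ∈ Finset.univ.erase h0, (∑ C ∈ π.parts, (C ∩ R.elemClique h).card^2)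
          + ∑ C ∈ π.parts, (C ∩ R.elemClique h0).card^2
          = ∑ h, ∑ C ∈ π.parts, (C ∩ R.elemClique h).card^2 :=
        Finset.sum_erase_add _ _ (Finset.mem_univ h0)
      have h5 := hx0 h0
      have h6 : (x h0 - 1) * x h0 + x h0 = x h0 ^ 2 := by
        have h7 : x h0 - 1 + 1 = x h0 := Nat.succ_pred_eq_of_pos h5
        calc (x h0 - 1) * x h0 + x h0 = (x h0 - 1 + 1) * x h0 := by ring
          _ = x h0 * x h0 := by rw [h7]
          _ = x h0^2 := (pow_two _).symm
      linarith [h1, h2, h3, h4, h6]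
    have hBBq : BB + ((x h0 : ℚ)) ≤ Qq := by
      rw [hBBdef, hQqdef]
      exact_mod_cast hBBn
    have hxq : (t:ℚ) + 1 ≤ 4*((x h0:ℚ)) := by
      have := (hx h0).1
      rw [htdef]
      exact_mod_cast this
    -- plug into (K)
    have hKK : (N+1)*((x h0:ℚ)) ≤ Sq^2 := by
      have h6 : (0:ℚ) ≤ 2*(Sq - QY)*(N+1-Xq) := by
        apply mul_nonneg
        · linarith
        · linarith
      nlinarith [hK, hQQge, hYYnn, hBBq]
    rw [hNval, hSqdef] at hKK
    nlinarith [hKK, hxq, mul_pos hMpos htpos, mul_pos (mul_pos hMpos hMpos) htpos,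
      mul_nonneg (mul_nonneg (sub_nonneg.2 hM2) (pow_pos hMpos 3).le) (sq_nonneg t),
      mul_nonneg (mul_nonneg (sub_nonneg.2 hM2) hMpos.le) htpos.le]
  -- elimination C : every part contains at least one set clique
  have hq1 : ∀ C ∈ π.parts, 1 ≤ qC R C := by
    by_contra hcon
    push_neg at hcon
    obtain ⟨C0, hC0, hq0⟩ := hcon
    have hq0' : qC R C0 = 0 := by omega
    obtain ⟨i, hi⟩ := π.nonempty_of_mem_parts hC0
    have hiUU : i ∈ Ue R ∪ Us R := by rw [Ue_union_Us]; exact Finset.mem_univ i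
    have helemcase : ∃ h, R.elemClique h ⊆ C0 := by
      rcases Finset.mem_union.1 hiUU with hiu | his
      · obtain ⟨h, hih⟩ := (mem_Ue R).1 hiu
        obtain ⟨C', hC', hsub⟩ := helem h
        have : C0 = C' := π.eq_of_mem_parts hC0 hC' hi (hsub hih)
        exact ⟨h, this ▸ hsub⟩
      · exfalso
        obtain ⟨k, hik⟩ := (mem_Us R).1 his
        obtain ⟨C', hC', hsub⟩ := hwhole k
        have heq : C0 = C' := π.eq_of_mem_parts hC0 hC' hi (hsub hik)
        have : k ∈ Finset.univ.filter fun k => R.setClique k ⊆ C0 := by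
          rw [Finset.mem_filter]
          exact ⟨Finset.mem_univ k, heq ▸ hsub⟩
        have := Finset.card_pos.2 ⟨k, this⟩
        rw [← qC] at this  -- qC def
        omega
    obtain ⟨h0, hsub0⟩ := helemcase
    have hy0 : ((x h0 : ℚ)) ≤ (((C0 ∩ Ue R).card : ℚ)) := by
      have h1 : R.elemClique h0 ⊆ C0 ∩ Ue R := fun a ha =>
        Finset.mem_inter.2 ⟨hsub0 ha, elemClique_sub_Ue R h0 ha⟩
      have h2 := Finset.card_le_card h1
      rw [R.elem_card h0] at h2
      exact_mod_cast h2
    have hSQY2 : ((x h0:ℚ)) ≤ Sq - QY := by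
      have h1 : Sq - QY = ∑ C ∈ π.parts,
          ((((C ∩ Ue R).card : ℚ)) - (((C ∩ Ue R).card : ℚ)) * ((qC R C : ℚ))) := by
        rw [Finset.sum_sub_distrib, hy_sum, hQYdef]
      rw [h1]
      have h2 : ((x h0:ℚ)) ≤ (((C0 ∩ Ue R).card : ℚ))
          - (((C0 ∩ Ue R).card : ℚ)) * ((qC R C0 : ℚ)) := by
        rw [hq0']
        push_cast
        linarith
      calc ((x h0:ℚ)) ≤ _ := h2
        _ ≤ _ := Finset.single_le_sum hSQYptw hC0
    have hxq : (t:ℚ) + 1 ≤ 4*((x h0:ℚ)) := by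
      have := (hx h0).1
      rw [htdef]
      exact_mod_cast this
    have hKK : 2*((x h0:ℚ))*(N+1-Xq) ≤ Sq^2 := by
      have h6 : 2*((x h0:ℚ))*(N+1-Xq) ≤ 2*(Sq - QY)*(N+1-Xq) := by
        apply mul_le_mul_of_nonneg_right _ (by linarith : (0:ℚ) ≤ N+1-Xq)
        linarith
      nlinarith [hK, hQQge, hYYnn, hB1]
    rw [hNval, hSqdef, hXqdef] at hKK
    nlinarith [hKK, hxq, mul_pos hMpos htpos, mul_pos (mul_pos hMpos hMpos) htpos,
      mul_nonneg (mul_nonneg (sub_nonneg.2 hM2) (sq_nonneg M)) (sq_nonneg t),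
      mul_nonneg (mul_nonneg (sub_nonneg.2 ht1) (pow_pos hMpos 2).le) htpos.le,
      mul_nonneg (mul_nonneg (sub_nonneg.2 hM2) (pow_pos hMpos 2).le) (sq_nonneg t)]
  exact ⟨fun C hC => le_antisymm (hqle1 C hC) (hq1 C hC), helem⟩

end Stmt11Aux
open Stmt11Aux in
/-- In the reduced FA instance with `m > 1`, every optimal partition has exactly `m`
coalitions, each containing exactly one set-clique, and each element-clique is either
contained in or disjoint from every coalition. -/
theorem stmt11 (m T n : ℕ) (hm : 1 < m) (hT : 0 < T)
    (x : Fin (3 * m) → ℕ)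
    (hsum : ∑ h, x h = m * T)
    (hx : ∀ h, T < 4 * x h ∧ 2 * x h < T)
    (hn : n = m * T + 4 * m ^ 3 * T)
    (R : ReducedFA m T n x)
    (π : Finpartition (univ : Finset (Fin n)))
    (hopt : ∀ σ : Finpartition (univ : Finset (Fin n)), faSW n R.F σ ≤ faSW n R.F π) :
    π.parts.card = m ∧
      ∀ C ∈ π.parts,
        (∃! k : Fin m, R.setClique k ⊆ C) ∧
        ∀ h : Fin (3 * m), R.elemClique h ⊆ C ∨ Disjoint (R.elemClique h) C := by
  have hm1 : 0 < m := lt_trans one_pos hm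
  have hX : 0 < 4*m^2*T := by positivity
  have hwhole := step1 R hm hT hsum hx hn π hopt
  obtain ⟨hq1, helem⟩ := main_structure R hm hT hsum hx hn π hopt
  constructor
  · calc π.parts.card = ∑ _C ∈ π.parts, 1 := by
          rw [Finset.sum_const, smul_eq_mul, mul_one]
      _ = ∑ C ∈ π.parts, qC R C := Finset.sum_congr rfl fun C hC => (hq1 C hC).symm
      _ = m := sum_q R π hX hwhole
  · intro C hC
    constructor
    · have hcard1 : (Finset.univ.filter fun k => R.setClique k ⊆ C).card = 1 := hq1 C hC
      obtain ⟨k0, hk0⟩ := Finset.card_eq_one.1 hcard1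
      refine ⟨k0, ?_, ?_⟩
      · have hmem : k0 ∈ Finset.univ.filter fun k => R.setClique k ⊆ C := by
          rw [hk0]; exact Finset.mem_singleton_self k0
        exact (Finset.mem_filter.1 hmem).2
      · intro k' hk'
        have hmem : k' ∈ Finset.univ.filter fun k => R.setClique k ⊆ C :=
          Finset.mem_filter.2 ⟨Finset.mem_univ _, hk'⟩
        rw [hk0] at hmem
        exact Finset.mem_singleton.1 hmem
    · intro h
      obtain ⟨C', hC', hsub⟩ := helem h
      by_cases heq : C = C'
      · left; rw [heq]; exact hsub
      · right
        have hd : Disjoint C' C :=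
          π.disjoint (Finset.mem_coe.2 hC') (Finset.mem_coe.2 hC) (fun hcc => heq hcc.symm)
        exact Finset.disjoint_of_subset_left hsub hd
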